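/- Let 1 ≤ p < ∞ and let f : [0,1] → ℂ have finite total Wiener p-variation. For every ε > 0 there exists δ > 0 such that for any finite sequence 0 ≤ x₁ < x₂ < ⋯ < x_m ≤ 1 with |f(x_j)| < δ for all j, one has (Σ_{j=1}^{m−1} |f(x_{j+1}) − f(x_j)|^p)^{1/p} < ε. -/

import Mathlib

open Finset in
/-- The set of all Wiener `p`-variation sums of `f` over partitions of `[a,b]`. -/
def varSums (p : ℝ) (f : ℝ → ℂ) (a b : ℝ) : Set ℝ :=
  {s | ∃ (m : ℕ) (t : ℕ → ℝ), 0 < m ∧ t 0 = a ∧ t m = b ∧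
        (∀ j < m, t j < t (j + 1)) ∧
        s = ∑ j ∈ Finset.range m, ‖f (t (j + 1)) - f (t j)‖ ^ p}

/-- The total Wiener `p`-variation of `f` on `[a,b]`. -/
noncomputable def pVar (p : ℝ) (f : ℝ → ℂ) (a b : ℝ) : ℝ := sSup (varSums p f a b)

/-- The supremum norm of `f` on `[0,1]`. -/
noncomputable def supNorm (f : ℝ → ℂ) : ℝ :=
  sSup ((fun x => ‖f x‖) '' Set.Icc (0:ℝ) 1)

/-- The infimum of `|f|` on `[0,1]`. -/
noncomputable def infAbs (f : ℝ → ℂ) : ℝ :=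
  sInf ((fun x => ‖f x‖) '' Set.Icc (0:ℝ) 1)

/-- The `BV_p` norm of `f` on `[0,1]`. -/
noncomputable def bvNorm (p : ℝ) (f : ℝ → ℂ) : ℝ :=
  supNorm f + (pVar p f 0 1) ^ (1 / p)

namespace Stmt8Aux

/-- absolute value of f -/
noncomputable def af (f : ℝ → ℂ) (x : ℝ) : ℝ := ‖f x‖

/-- one variation term -/
noncomputable def Tm (p : ℝ) (f : ℝ → ℂ) (a b : ℝ) : ℝ := ‖f b - f a‖ ^ p

/-- sum of variation terms over consecutive pairs of a list -/
noncomputable def PS (p : ℝ) (f : ℝ → ℂ) : List ℝ → ℝ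
  | [] => 0
  | [_] => 0
  | a :: b :: t => Tm p f a b + PS p f (b :: t)

/-- pair weight (potential) for labelled points (point, entry scale) -/
noncomputable def w (p : ℝ) (f : ℝ → ℂ) (u v : ℝ × ℝ) : ℝ :=
  max (((2:ℝ)^p)⁻¹ * Tm p f u.1 v.1)
    (max ((max (af f u.1 - 2*v.2) 0) ^ p) ((max (af f v.1 - 2*u.2) 0) ^ p))

/-- potential of a labelled list -/
noncomputable def Phi (p : ℝ) (f : ℝ → ℂ) : List (ℝ × ℝ) → ℝ
  | [] => 0
  | [_] => 0
  | u :: v :: t => w p f u v + Phi p f (v :: t)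

/-- insert a (sorted) family of fine points (at scale d) into a labelled list -/
noncomputable def ins (d : ℝ) : List (ℝ × ℝ) → List ℝ → List (ℝ × ℝ)
  | [], F => F.map (fun x => (x, d))
  | z :: rest, F =>
      (F.takeWhile (fun x => x < z.1)).map (fun x => (x, d)) ++
        z :: ins d rest (F.dropWhile (fun x => x < z.1))

/-- bonus term in merge lemma -/
noncomputable def bns (f : ℝ → ℂ) (p d : ℝ) : List (ℝ × ℝ) → List ℝ → ℝ
  | [], _ => 0
  | z :: _, F => if F.takeWhile (fun x => x < z.1) = [] then 0
      else (max (af f z.1 - 2*d) 0) ^ p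

/-- state invariant -/
def Inv (f : ℝ → ℂ) (l : List (ℝ × ℝ)) (σ : ℝ) : Prop :=
  l.Pairwise (fun u v => u.1 < v.1) ∧
    ∀ q ∈ l, 0 ≤ q.1 ∧ q.1 ≤ 1 ∧ af f q.1 < q.2 ∧ σ ≤ q.2 ∧ q.2 ≤ 1

section basic

variable {p : ℝ} {f : ℝ → ℂ} (hp : 1 ≤ p)

lemma hp0 (hp : 1 ≤ p) : 0 ≤ p := le_trans zero_le_one hp

lemma af_nonneg (f : ℝ → ℂ) (x : ℝ) : 0 ≤ af f x := norm_nonneg _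

lemma Tm_nonneg (p : ℝ) (f : ℝ → ℂ) (a b : ℝ) : 0 ≤ Tm p f a b :=
  Real.rpow_nonneg (norm_nonneg _) _

lemma two_rpow_pos : (0:ℝ) < (2:ℝ)^p := Real.rpow_pos_of_pos (by norm_num) _

lemma one_le_two_rpow (hp : 1 ≤ p) : (1:ℝ) ≤ (2:ℝ)^p := by
  have := Real.rpow_le_rpow_of_exponent_le (x := (2:ℝ)) (by norm_num) (hp0 hp |>.trans (le_refl p))
  simpa [Real.rpow_zero] using Real.rpow_le_rpow_of_exponent_le (x := (2:ℝ)) (by norm_num)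
    (le_trans zero_le_one hp : (0:ℝ) ≤ p)

lemma beta_pos : (0:ℝ) < ((2:ℝ)^p)⁻¹ := inv_pos.mpr two_rpow_pos

lemma beta_le_one (hp : 1 ≤ p) : ((2:ℝ)^p)⁻¹ ≤ 1 := by
  rw [inv_le_one_iff₀]
  right
  exact one_le_two_rpow hp

lemma abs_sub_le_af (f : ℝ → ℂ) (a b : ℝ) :
    ‖f b - f a‖ ≤ af f a + af f b := by
  have := norm_sub_le (f b) (f a)
  simpa [af, add_comm] using this

lemma Tm_le_of_lt {d : ℝ} (hd : 0 ≤ d) {a b : ℝ} (ha : af f a < d) (hb : af f b < d)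
    (hp : 1 ≤ p) : Tm p f a b ≤ (2*d)^p := by
  apply Real.rpow_le_rpow (norm_nonneg _) _ (hp0 hp)
  calc ‖f b - f a‖ ≤ af f a + af f b := abs_sub_le_af f a b
    _ ≤ 2*d := by linarith

/-- (a+b)^p ≤ 2^p (a^p + b^p) -/
lemma sum_bound (hp : 1 ≤ p) {a b : ℝ} (ha : 0 ≤ a) (hb : 0 ≤ b) :
    (a+b)^p ≤ (2:ℝ)^p * (a^p + b^p) := by
  have h1 : a + b ≤ 2 * max a b := by
    rcases le_total a b with h | h
    · simp [max_eq_right h]; linarith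
    · simp [max_eq_left h]; linarith
  have h2 : (a+b)^p ≤ (2 * max a b)^p :=
    Real.rpow_le_rpow (by linarith) h1 (hp0 hp)
  have h3 : (2 * max a b)^p = (2:ℝ)^p * (max a b)^p :=
    Real.mul_rpow (by norm_num) (le_max_of_le_left ha)
  have h4 : (max a b)^p ≤ a^p + b^p := by
    rcases le_total a b with h | h
    · rw [max_eq_right h]
      have := Real.rpow_nonneg ha p
      linarith
    · rw [max_eq_left h]
      have := Real.rpow_nonneg hb p
      linarith
  calc (a+b)^p ≤ (2 * max a b)^p := h2
    _ = (2:ℝ)^p * (max a b)^p := h3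
    _ ≤ (2:ℝ)^p * (a^p + b^p) := by
        apply mul_le_mul_of_nonneg_left h4 (le_of_lt two_rpow_pos)

/-- a^p ≤ (a-t)₊^p + p t  for 0 ≤ a ≤ 1, 0 ≤ t -/
lemma smalldiff (hp : 1 ≤ p) {a t : ℝ} (ha0 : 0 ≤ a) (ha1 : a ≤ 1) (ht : 0 ≤ t) :
    a^p ≤ (max (a - t) 0)^p + p * t := by
  rcases le_or_gt a t with h | h
  · -- a ≤ t : a^p ≤ a ≤ t ≤ p t
    have h0 : a^p ≤ a := by
      rcases eq_or_lt_of_le ha0 with rfl | hpos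
      · simp [Real.zero_rpow (by linarith : p ≠ 0)]
      · have := Real.rpow_le_rpow_of_exponent_ge hpos ha1 hp
        simpa [Real.rpow_one] using this
    have h1 : 0 ≤ (max (a - t) 0)^p := Real.rpow_nonneg (le_max_right _ _) _
    have h2 : a ≤ p * t := by nlinarith
    nlinarith
  · -- t < a : Bernoulli
    have hapos : 0 < a := lt_of_le_of_lt ht h
    have hs : (-1:ℝ) ≤ -(t/a) := by
      have : t/a < 1 := (div_lt_one hapos).mpr h
      linarith
    have hb := one_add_mul_self_le_rpow_one_add hs hp
    have h1 : (1 + -(t/a)) = (a - t)/a := by field_simp; ring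
    rw [h1] at hb
    have h2 : ((a-t)/a)^p = (a-t)^p / a^p :=
      Real.div_rpow (by linarith) (le_of_lt hapos) p
    rw [h2] at hb
    -- hb : 1 + p * -(t/a) ≤ (a-t)^p / a^p
    have hap : (0:ℝ) < a^p := Real.rpow_pos_of_pos hapos _
    have hb2 : (1 - p * (t/a)) * a^p ≤ (a-t)^p := by
      have := mul_le_mul_of_nonneg_right hb (le_of_lt hap)
      calc (1 - p * (t/a)) * a^p = (1 + p * -(t/a)) * a^p := by ring
        _ ≤ (a-t)^p / a^p * a^p := this
        _ = (a-t)^p := by field_simp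
    have hmax : max (a - t) 0 = a - t := max_eq_left (by linarith)
    rw [hmax]
    have hfrac : p * (t/a) * a^p = p * t * (a^p / a) := by ring
    have hdiv : a^p / a ≤ 1 := by
      rw [div_le_one hapos]
      calc a^p ≤ a^(1:ℝ) := Real.rpow_le_rpow_of_exponent_ge hapos ha1 hp
        _ = a := Real.rpow_one a
    have hpt : p * (t/a) * a^p ≤ p * t := by
      rw [hfrac]
      have hpt0 : 0 ≤ p * t := mul_nonneg (hp0 hp) ht
      nlinarith [Real.rpow_nonneg (le_of_lt hapos) p]
    nlinarith

end basic


section struct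

variable {p : ℝ} {f : ℝ → ℂ}

lemma PS_nil : PS p f [] = 0 := rfl
lemma PS_single (a : ℝ) : PS p f [a] = 0 := rfl
lemma PS_cons_cons (a b : ℝ) (t : List ℝ) :
    PS p f (a :: b :: t) = Tm p f a b + PS p f (b :: t) := rfl

lemma PS_nonneg : ∀ l : List ℝ, 0 ≤ PS p f l
  | [] => le_refl 0
  | [_] => le_refl 0
  | a :: b :: t => add_nonneg (Tm_nonneg p f a b) (PS_nonneg (b :: t))

lemma PS_cons_ge : ∀ (a : ℝ) (l : List ℝ), PS p f l ≤ PS p f (a :: l)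
  | _, [] => le_refl 0
  | a, b :: t => by
      rw [PS_cons_cons]
      have := Tm_nonneg p f a b
      linarith

lemma Phi_nil : Phi p f [] = 0 := rfl
lemma Phi_single (u : ℝ × ℝ) : Phi p f [u] = 0 := rfl
lemma Phi_cons_cons (u v : ℝ × ℝ) (t : List (ℝ × ℝ)) :
    Phi p f (u :: v :: t) = w p f u v + Phi p f (v :: t) := rfl

lemma w_nonneg (hp : 1 ≤ p) (u v : ℝ × ℝ) : 0 ≤ w p f u v :=
  le_trans (mul_nonneg (le_of_lt beta_pos) (Tm_nonneg p f u.1 v.1)) (le_max_left _ _)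

lemma Phi_nonneg (hp : 1 ≤ p) : ∀ l : List (ℝ × ℝ), 0 ≤ Phi p f l
  | [] => le_refl 0
  | [_] => le_refl 0
  | u :: v :: t => add_nonneg (w_nonneg hp u v) (Phi_nonneg hp (v :: t))

lemma Phi_cons_ge (hp : 1 ≤ p) : ∀ (u : ℝ × ℝ) (l : List (ℝ × ℝ)),
    Phi p f l ≤ Phi p f (u :: l)
  | _, [] => le_refl 0
  | u, v :: t => by
      rw [Phi_cons_cons]
      have := w_nonneg (f := f) hp u v
      linarith

lemma Phi_append_cons : ∀ (X : List (ℝ × ℝ)) (y : ℝ × ℝ) (Y : List (ℝ × ℝ)),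
    Phi p f (X ++ y :: Y) = Phi p f (X ++ [y]) + Phi p f (y :: Y)
  | [], y, Y => by simp [Phi_single]
  | [x], y, Y => by
      simp only [List.cons_append, List.nil_append]
      rw [Phi_cons_cons]
      simp [Phi_single, Phi_cons_cons]
  | x₁ :: x₂ :: X', y, Y => by
      simp only [List.cons_append]
      rw [Phi_cons_cons, Phi_cons_cons (t := (X' ++ [y]))]
      have := Phi_append_cons (x₂ :: X') y Y
      simp only [List.cons_append] at this
      rw [this]
      ring

/-- cross-term bounded append estimate -/
lemma PS_append_le (hp : 1 ≤ p) {d : ℝ} (hd : 0 ≤ d) :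
    ∀ (X Y : List ℝ), (∀ x ∈ X, af f x < d) → (∀ y ∈ Y, af f y < d) →
    PS p f (X ++ Y) ≤ PS p f X + PS p f Y + (2*d)^p
  | [], Y, _, _ => by
      simp [PS_nil]
      exact Real.rpow_nonneg (by linarith) p
  | [a], Y, hX, hY => by
      simp only [List.cons_append, List.nil_append]
      rcases Y with _ | ⟨y, Y'⟩
      · simp [PS_single, PS_nil]
        exact Real.rpow_nonneg (by linarith) p
      · rw [PS_cons_cons]
        have h1 : Tm p f a y ≤ (2*d)^p :=
          Tm_le_of_lt hd (hX a (by simp)) (hY y (by simp)) hp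
        simp [PS_single]
        linarith
  | a :: b :: X', Y, hX, hY => by
      simp only [List.cons_append]
      rw [PS_cons_cons]
      have := PS_append_le hp hd (b :: X') Y (fun x hx => hX x (List.mem_cons_of_mem a hx)) hY
      simp only [List.cons_append] at this
      rw [PS_cons_cons (t := X')]
      linarith

lemma PS_snoc_ge : ∀ (X : List ℝ) (e : ℝ), PS p f X ≤ PS p f (X ++ [e])
  | [], e => le_refl 0
  | [a], e => by
      simp only [List.cons_append, List.nil_append]
      rw [PS_cons_cons]
      have := Tm_nonneg p f a e
      simp [PS_single, PS_nil]
      linarith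
  | a :: b :: X', e => by
      simp only [List.cons_append]
      rw [PS_cons_cons, PS_cons_cons (t := X' ++ [e])]
      have := PS_snoc_ge (b :: X') e
      simp only [List.cons_append] at this
      linarith

lemma PS_snoc_eq : ∀ (X : List ℝ) (e : ℝ) (hX : X ≠ []),
    PS p f (X ++ [e]) = PS p f X + Tm p f (X.getLast hX) e
  | [], _, h => absurd rfl h
  | [a], e, _ => by simp [PS_cons_cons, PS_single, PS_nil]
  | a :: b :: X', e, _ => by
      simp only [List.cons_append]
      rw [PS_cons_cons, PS_cons_cons (t := X')]
      have := PS_snoc_eq (b :: X') e (by simp)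
      simp only [List.cons_append] at this
      rw [this]
      simp [List.getLast]
      ring

end struct


section wlem

variable {p : ℝ} {f : ℝ → ℂ}

lemma w_ge_beta (u v : ℝ × ℝ) : ((2:ℝ)^p)⁻¹ * Tm p f u.1 v.1 ≤ w p f u v :=
  le_max_left _ _

lemma w_ge_anchor1 (u v : ℝ × ℝ) : (max (af f u.1 - 2*v.2) 0) ^ p ≤ w p f u v :=
  le_max_of_le_right (le_max_left _ _)

lemma w_ge_anchor2 (u v : ℝ × ℝ) : (max (af f v.1 - 2*u.2) 0) ^ p ≤ w p f u v :=
  le_max_of_le_right (le_max_right _ _)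

/-- certificate: the weight is below the true variation term -/
lemma w_le_Tm (hp : 1 ≤ p) {u v : ℝ × ℝ} (hu : af f u.1 < u.2) (hv : af f v.1 < v.2) :
    w p f u v ≤ Tm p f u.1 v.1 := by
  have habs := abs_norm_sub_norm_le (f v.1) (f u.1)
  -- |af v - af u| ≤ |f v - f u|
  have h1 : af f u.1 - af f v.1 ≤ ‖f v.1 - f u.1‖ := by
    rw [abs_le] at habs
    have := habs.1
    simp only [af] at *
    linarith
  have h2 : af f v.1 - af f u.1 ≤ ‖f v.1 - f u.1‖ := by
    rw [abs_le] at habs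
    have := habs.2
    simp only [af] at *
    linarith
  have hu2 : 0 ≤ u.2 := le_trans (af_nonneg f u.1) (le_of_lt hu)
  have hv2 : 0 ≤ v.2 := le_trans (af_nonneg f v.1) (le_of_lt hv)
  have habsnn : (0:ℝ) ≤ ‖f v.1 - f u.1‖ := norm_nonneg _
  apply max_le
  · calc ((2:ℝ)^p)⁻¹ * Tm p f u.1 v.1 ≤ 1 * Tm p f u.1 v.1 :=
        mul_le_mul_of_nonneg_right (beta_le_one hp) (Tm_nonneg p f u.1 v.1)
      _ = Tm p f u.1 v.1 := one_mul _
  apply max_le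
  · apply Real.rpow_le_rpow (le_max_right _ _) _ (hp0 hp)
    apply max_le _ habsnn
    have := af_nonneg f v.1
    linarith
  · apply Real.rpow_le_rpow (le_max_right _ _) _ (hp0 hp)
    apply max_le _ habsnn
    have := af_nonneg f u.1
    linarith

/-- replacement estimate: when an old pair gets split by fine points at scale d -/
lemma w_replace (hp : 1 ≤ p) {d : ℝ} (hd : 0 < d) {u v : ℝ × ℝ}
    (hu : af f u.1 < u.2) (hu1 : u.2 ≤ 1) (hud : d ≤ u.2)
    (hv : af f v.1 < v.2) (hv1 : v.2 ≤ 1) (hvd : d ≤ v.2) :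
    w p f u v ≤ (max (af f u.1 - 2*d) 0)^p + (max (af f v.1 - 2*d) 0)^p + 4*p*d := by
  have hau0 : 0 ≤ af f u.1 := af_nonneg f u.1
  have hav0 : 0 ≤ af f v.1 := af_nonneg f v.1
  have hau1 : af f u.1 ≤ 1 := le_trans (le_of_lt hu) hu1
  have hav1 : af f v.1 ≤ 1 := le_trans (le_of_lt hv) hv1
  have hA : 0 ≤ (max (af f u.1 - 2*d) 0)^p := Real.rpow_nonneg (le_max_right _ _) _
  have hB : 0 ≤ (max (af f v.1 - 2*d) 0)^p := Real.rpow_nonneg (le_max_right _ _) _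
  have hsd1 := smalldiff hp hau0 hau1 (by linarith : (0:ℝ) ≤ 2*d)
  have hsd2 := smalldiff hp hav0 hav1 (by linarith : (0:ℝ) ≤ 2*d)
  apply max_le
  · -- beta * Tm ≤ afu^p + afv^p ≤ ...
    have h1 : Tm p f u.1 v.1 ≤ (af f u.1 + af f v.1)^p := by
      apply Real.rpow_le_rpow (norm_nonneg _) _ (hp0 hp)
      simpa [af] using abs_sub_le_af f u.1 v.1
    have h2 := sum_bound hp hau0 hav0
    have h3 : ((2:ℝ)^p)⁻¹ * Tm p f u.1 v.1 ≤ (af f u.1)^p + (af f v.1)^p := by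
      have hb := beta_pos (p := p)
      have := mul_le_mul_of_nonneg_left (le_trans h1 h2) (le_of_lt hb)
      calc ((2:ℝ)^p)⁻¹ * Tm p f u.1 v.1 ≤ ((2:ℝ)^p)⁻¹ * ((2:ℝ)^p * ((af f u.1)^p + (af f v.1)^p)) := this
        _ = (af f u.1)^p + (af f v.1)^p := by
            field_simp
    calc ((2:ℝ)^p)⁻¹ * Tm p f u.1 v.1 ≤ (af f u.1)^p + (af f v.1)^p := h3
      _ ≤ (max (af f u.1 - 2*d) 0)^p + p*(2*d) + ((max (af f v.1 - 2*d) 0)^p + p*(2*d)) := by linarith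
      _ = (max (af f u.1 - 2*d) 0)^p + (max (af f v.1 - 2*d) 0)^p + 4*p*d := by ring
  apply max_le
  · have h1 : max (af f u.1 - 2*v.2) 0 ≤ max (af f u.1 - 2*d) 0 :=
      max_le_max (by linarith) (le_refl 0)
    have := Real.rpow_le_rpow (le_max_right _ _) h1 (hp0 hp)
    have hpd : 0 ≤ 4*p*d := by
      have := hp0 hp
      positivity
    linarith
  · have h1 : max (af f v.1 - 2*u.2) 0 ≤ max (af f v.1 - 2*d) 0 :=
      max_le_max (by linarith) (le_refl 0)
    have := Real.rpow_le_rpow (le_max_right _ _) h1 (hp0 hp)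
    have hpd : 0 ≤ 4*p*d := by
      have := hp0 hp
      positivity
    linarith

/-- potential of a pure fine list -/
lemma Phi_fine_list (hp : 1 ≤ p) (d : ℝ) : ∀ F : List ℝ,
    ((2:ℝ)^p)⁻¹ * PS p f F ≤ Phi p f (F.map (fun x => (x, d)))
  | [] => by simp [PS_nil, Phi_nil]
  | [a] => by simp [PS_single, Phi_single]
  | a :: b :: t => by
      simp only [List.map_cons]
      rw [Phi_cons_cons, PS_cons_cons, mul_add]
      have h1 := w_ge_beta (p := p) (f := f) (a, d) (b, d)
      have h2 := Phi_fine_list hp d (b :: t)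
      simp only [List.map_cons] at h2
      linarith

/-- potential of a fine block followed by an old point: anchors the old point -/
lemma Phi_fine_block (hp : 1 ≤ p) (d : ℝ) (z : ℝ × ℝ) : ∀ F : List ℝ,
    ((2:ℝ)^p)⁻¹ * PS p f F + (if F = [] then 0 else (max (af f z.1 - 2*d) 0)^p)
      ≤ Phi p f (F.map (fun x => (x, d)) ++ [z])
  | [] => by simp [PS_nil, Phi_single]
  | [a] => by
      simp only [List.map_cons, List.map_nil, List.cons_append, List.nil_append]
      rw [Phi_cons_cons]
      have h1 := w_ge_anchor2 (p := p) (f := f) (a, d) z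
      simp only [PS_single, Phi_single, if_neg (by simp : ¬([a] = ([]:List ℝ)))]
      simp at h1 ⊢
      linarith
  | a :: b :: t => by
      simp only [List.map_cons, List.cons_append]
      rw [Phi_cons_cons, PS_cons_cons, mul_add]
      have h1 := w_ge_beta (p := p) (f := f) (a, d) (b, d)
      have h2 := Phi_fine_block hp d z (b :: t)
      simp only [List.map_cons, List.cons_append, if_neg (by simp : ¬(b :: t = ([]:List ℝ)))] at h2
      simp only [if_neg (by simp : ¬(a :: b :: t = ([]:List ℝ)))]
      linarith

end wlem


section sorted

variable {p : ℝ} {f : ℝ → ℂ}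

/-- elements of dropWhile (· < c) in a sorted list are ≥ c -/
lemma dropWhile_sorted_ge {c : ℝ} : ∀ {F : List ℝ}, F.Pairwise (· < ·) →
    ∀ x ∈ F.dropWhile (fun y => y < c), ¬ (x < c) := by
  intro F
  induction F with
  | nil => intro _ x hx; simp at hx
  | cons a t ih =>
      intro hs x hx
      by_cases ha : a < c
      · rw [List.dropWhile_cons_of_pos (by simpa using ha)] at hx
        exact ih (List.Pairwise.of_cons hs) x hx
      · rw [List.dropWhile_cons_of_neg (by simpa using ha)] at hx
        rcases List.mem_cons.mp hx with rfl | hx'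
        · exact ha
        · have := (List.pairwise_cons.mp hs).1 x hx'
          intro hlt; exact ha (lt_trans this hlt)

lemma ins_mem (d : ℝ) : ∀ (l : List (ℝ × ℝ)) (F : List ℝ),
    ∀ q ∈ ins d l F, q ∈ l ∨ (q.1 ∈ F ∧ q.2 = d)
  | [], F => by
      intro q hq
      simp only [ins] at hq
      rcases List.mem_map.mp hq with ⟨x, hx, rfl⟩
      exact Or.inr ⟨hx, rfl⟩
  | z :: rest, F => by
      intro q hq
      simp only [ins, List.mem_append, List.mem_cons] at hq
      rcases hq with hq | hq | hq
      · rcases List.mem_map.mp hq with ⟨x, hx, rfl⟩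
        exact Or.inr ⟨(List.takeWhile_sublist _).subset hx, rfl⟩
      · exact Or.inl (by simp [hq])
      · rcases ins_mem d rest (F.dropWhile (fun x => x < z.1)) q hq with h | ⟨h1, h2⟩
        · exact Or.inl (List.mem_cons_of_mem z h)
        · exact Or.inr ⟨(List.dropWhile_sublist _).subset h1, h2⟩

lemma ins_sorted (d : ℝ) : ∀ (l : List (ℝ × ℝ)) (F : List ℝ),
    l.Pairwise (fun u v => u.1 < v.1) → F.Pairwise (· < ·) →
    (∀ x ∈ F, x ∉ l.map Prod.fst) →
    (ins d l F).Pairwise (fun u v => u.1 < v.1)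
  | [], F => by
      intro _ hF _
      simp only [ins]
      exact hF.map _ (fun a b h => by simpa using h)
  | z :: rest, F => by
      intro hl hF hdisj
      simp only [ins]
      rw [List.pairwise_append]
      have hdw : ∀ x ∈ F.dropWhile (fun y => y < z.1), z.1 < x := by
        intro x hx
        have h1 := dropWhile_sorted_ge hF x hx
        have h2 : x ≠ z.1 := by
          intro h
          exact hdisj x ((List.dropWhile_sublist _).subset hx) (by simp [h])
        push_neg at h1
        exact lt_of_le_of_ne h1 (Ne.symm h2)
      refine ⟨?_, ?_, ?_⟩
      · exact ((hF.sublist (List.takeWhile_sublist _)).map _ (fun a b h => by simpa using h))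
      · rw [List.pairwise_cons]
        constructor
        · intro q hq
          rcases ins_mem d rest _ q hq with h | ⟨h1, rfl⟩
          · exact (List.pairwise_cons.mp hl).1 q h
          · exact hdw q.1 h1
        · apply ins_sorted d rest _
          · exact List.Pairwise.of_cons hl
          · exact hF.sublist (List.dropWhile_sublist _)
          · intro x hx hmem
            exact hdisj x ((List.dropWhile_sublist _).subset hx)
              (by simp only [List.map_cons]; exact List.mem_cons_of_mem _ hmem)
      · intro a ha b hb
        rcases List.mem_map.mp ha with ⟨x, hx, rfl⟩
        have hxz : x < z.1 := by simpa using List.mem_takeWhile_imp hx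
        rcases List.mem_cons.mp hb with rfl | hb'
        · exact hxz
        · rcases ins_mem d rest _ b hb' with h | ⟨h1, _⟩
          · exact lt_trans hxz ((List.pairwise_cons.mp hl).1 b h)
          · exact lt_trans hxz (hdw b.1 h1)

end sorted


section merge

variable {p : ℝ} {f : ℝ → ℂ}

/-- THE MERGE LEMMA -/
lemma merge_main (hp : 1 ≤ p) {d σ : ℝ} (hd : 0 < d) (hdσ : d ≤ σ) :
    ∀ (l : List (ℝ × ℝ)) (F : List ℝ), Inv f l σ → F.Pairwise (· < ·) →
    (∀ x ∈ F, af f x < d) → (∀ x ∈ F, x ∉ l.map Prod.fst) →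
    Phi p f l + ((2:ℝ)^p)⁻¹ * PS p f F - (l.length + 1) * (4*p*d + 4*(2*d)^p)
      + bns f p d l F ≤ Phi p f (ins d l F)
  | [], F => by
      intro hInv hF hFd hdisj
      simp only [ins, bns, Phi_nil]
      have h1 := Phi_fine_list (f := f) hp d F
      have h2 : (0:ℝ) ≤ ((0:ℝ)+1) * (4*p*d + 4*(2*d)^p) := by
        have := hp0 hp
        have : (0:ℝ) ≤ (2*d)^p := Real.rpow_nonneg (by linarith) p
        have hpp := hp0 hp
        positivity
      simp only [List.length_nil, Nat.cast_zero]
      linarith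
  | z :: rest, F => by
      intro hInv hF hFd hdisj
      obtain ⟨hpair, hmem⟩ := hInv
      set A := F.takeWhile (fun x => x < z.1) with hA
      set F₂ := F.dropWhile (fun x => x < z.1) with hF₂
      have hsplit : A ++ F₂ = F := List.takeWhile_append_dropWhile
      have hAmem : ∀ x ∈ A, x ∈ F := fun x hx => (List.takeWhile_sublist _).subset hx
      have hF₂mem : ∀ x ∈ F₂, x ∈ F := fun x hx => (List.dropWhile_sublist _).subset hx
      have hd0 : (0:ℝ) ≤ d := le_of_lt hd
      have h2d : (0:ℝ) ≤ (2*d)^p := Real.rpow_nonneg (by linarith) p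
      have hpd : (0:ℝ) ≤ 4*p*d := by have := hp0 hp; positivity
      -- PS F ≤ PS A + PS F₂ + (2d)^p
      have hPSF : PS p f F ≤ PS p f A + PS p f F₂ + (2*d)^p := by
        rw [← hsplit]
        exact PS_append_le hp hd0 A F₂ (fun x hx => hFd x (hAmem x hx))
          (fun x hx => hFd x (hF₂mem x hx))
      have hbeta := beta_pos (p := p)
      have hbeta1 := beta_le_one hp
      have hPSA := PS_nonneg (p := p) (f := f) A
      have hPSF₂ := PS_nonneg (p := p) (f := f) F₂
      -- potential decomposition
      have hins : ins d (z :: rest) F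
          = A.map (fun x => (x, d)) ++ z :: ins d rest F₂ := by
        simp only [ins]; rfl
      set M := ins d rest F₂ with hM
      have hdec : Phi p f (ins d (z :: rest) F)
          = Phi p f (A.map (fun x => (x, d)) ++ [z]) + Phi p f (z :: M) := by
        rw [hins]; exact Phi_append_cons _ z M
      -- fine block part
      have hblock := Phi_fine_block (f := f) hp d z A
      have hbns : bns f p d (z :: rest) F
          = (if A = [] then 0 else (max (af f z.1 - 2*d) 0)^p) := by
        simp only [bns]; rfl
      -- IH setup
      have hInvRest : Inv f rest σ := ⟨List.Pairwise.of_cons hpair,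
        fun q hq => hmem q (List.mem_cons_of_mem z hq)⟩
      have hFs₂ : F₂.Pairwise (· < ·) := hF.sublist (List.dropWhile_sublist _)
      have hF₂d : ∀ x ∈ F₂, af f x < d := fun x hx => hFd x (hF₂mem x hx)
      have hdisj₂ : ∀ x ∈ F₂, x ∉ rest.map Prod.fst := by
        intro x hx hc
        exact hdisj x (hF₂mem x hx) (by simp only [List.map_cons]; exact List.mem_cons_of_mem _ hc)
      have hIH := merge_main hp hd hdσ rest F₂ hInvRest hFs₂ hF₂d hdisj₂
      rw [← hM] at hIH
      -- z's Inv facts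
      have hz := hmem z (by simp)
      -- main case analysis
      rcases heq : rest with _ | ⟨z₂, rest'⟩
      · -- rest = []
        subst heq
        have hMfine : M = F₂.map (fun x => (x, d)) := by simp [hM, ins]
        have h1 : ((2:ℝ)^p)⁻¹ * PS p f F₂ ≤ Phi p f (z :: M) := by
          rw [hMfine]
          exact le_trans (Phi_fine_list hp d F₂) (Phi_cons_ge hp z _)
        have hPhil : Phi p f [z] = 0 := Phi_single z
        rw [hdec, hbns, hPhil]
        have hlen : ((([z] : List (ℝ×ℝ)).length : ℝ) + 1) = 2 := by norm_num
        rw [hlen]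
        have hb2 : ((2:ℝ)^p)⁻¹ * PS p f F ≤ ((2:ℝ)^p)⁻¹ * PS p f A + ((2:ℝ)^p)⁻¹ * PS p f F₂
            + ((2:ℝ)^p)⁻¹ * (2*d)^p := by
          have := mul_le_mul_of_nonneg_left hPSF (le_of_lt hbeta)
          linarith [this, (mul_add ((2:ℝ)^p)⁻¹ (PS p f A + PS p f F₂) ((2*d)^p)).symm.le]
        have hb3 : ((2:ℝ)^p)⁻¹ * (2*d)^p ≤ (2*d)^p := by
          have := mul_le_mul_of_nonneg_right hbeta1 h2d
          simpa using this
        linarith [hblock, h1, hb2, hb3]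
      · -- rest = z₂ :: rest'
        rw [show z₂ :: rest' = rest from heq.symm]
        have hz₂ : (0 ≤ z₂.1 ∧ z₂.1 ≤ 1 ∧ af f z₂.1 < z₂.2 ∧ σ ≤ z₂.2 ∧ z₂.2 ≤ 1) := by
          apply hmem
          rw [heq]; simp
        have hwzz₂ : w p f z z₂ ≤ (max (af f z.1 - 2*d) 0)^p + (max (af f z₂.1 - 2*d) 0)^p + 4*p*d :=
          w_replace hp hd hz.2.2.1 hz.2.2.2.2 (le_trans hdσ hz.2.2.2.1)
            hz₂.2.2.1 hz₂.2.2.2.2 (le_trans hdσ hz₂.2.2.2.1)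
        have hPhiL : Phi p f (z :: rest) = w p f z z₂ + Phi p f rest := by
          rw [heq]; exact Phi_cons_cons z z₂ rest'
        -- shape of M
        rcases hB : F₂.takeWhile (fun x => x < z₂.1) with _ | ⟨b, B'⟩
        · -- no fine points in the gap (z, z₂): w z z₂ retained
          have hMshape : M = z₂ :: ins d rest' (F₂.dropWhile (fun x => x < z₂.1)) := by
            rw [hM, heq]
            simp only [ins, hB, List.map_nil, List.nil_append]
          have hPhiZM : Phi p f (z :: M) = w p f z z₂ + Phi p f M := by
            rw [hMshape]; exact Phi_cons_cons z z₂ _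
          have hbns₂ : bns f p d rest F₂ = 0 := by
            rw [heq]; simp only [bns, hB]; simp
          rw [hbns₂] at hIH
          rw [hdec, hbns, hPhiZM, hPhiL]
          have hlen2 : ((z :: rest).length : ℝ) = (rest.length : ℝ) + 1 := by
            simp
          have hb2 : ((2:ℝ)^p)⁻¹ * PS p f F ≤ ((2:ℝ)^p)⁻¹ * PS p f A + ((2:ℝ)^p)⁻¹ * PS p f F₂
              + ((2:ℝ)^p)⁻¹ * (2*d)^p := by
            have h' := mul_le_mul_of_nonneg_left hPSF (le_of_lt hbeta)
            rw [mul_add, mul_add] at h'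
            exact h'
          have hb3 : ((2:ℝ)^p)⁻¹ * (2*d)^p ≤ (2*d)^p := by
            have := mul_le_mul_of_nonneg_right hbeta1 h2d
            simpa using this
          rw [hlen2]
          linarith [hblock, hIH, hb2, hb3]
        · -- the gap (z, z₂) is split by fine point b
          have hMshape : M = (b, d) :: (B'.map (fun x => (x, d)) ++ z₂ ::
              ins d rest' (F₂.dropWhile (fun x => x < z₂.1))) := by
            rw [hM, heq]
            simp only [ins, hB, List.map_cons, List.cons_append]
          have hPhiZM : Phi p f (z :: M) = w p f z (b, d) + Phi p f M := by
            rw [hMshape]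
            exact Phi_cons_cons z (b, d) _
          have hbns₂ : bns f p d rest F₂ = (max (af f z₂.1 - 2*d) 0)^p := by
            rw [heq]; simp only [bns, hB]; simp
          rw [hbns₂] at hIH
          have hwzb : (max (af f z.1 - 2*d) 0)^p ≤ w p f z (b, d) := by
            have := w_ge_anchor1 (p := p) (f := f) z (b, d)
            simpa using this
          rw [hdec, hbns, hPhiZM, hPhiL]
          have hlen2 : ((z :: rest).length : ℝ) = (rest.length : ℝ) + 1 := by simp
          have hb2 : ((2:ℝ)^p)⁻¹ * PS p f F ≤ ((2:ℝ)^p)⁻¹ * PS p f A + ((2:ℝ)^p)⁻¹ * PS p f F₂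
              + ((2:ℝ)^p)⁻¹ * (2*d)^p := by
            have h' := mul_le_mul_of_nonneg_left hPSF (le_of_lt hbeta)
            rw [mul_add, mul_add] at h'
            exact h'
          have hb3 : ((2:ℝ)^p)⁻¹ * (2*d)^p ≤ (2*d)^p := by
            have := mul_le_mul_of_nonneg_right hbeta1 h2d
            simpa using this
          rw [hlen2]
          linarith [hblock, hIH, hwzz₂, hwzb, hb2, hb3]

end merge


section filterlem

variable {p : ℝ} {f : ℝ → ℂ}

/-- removing points from a list loses at most 2M per removed point -/
lemma PS_filter (hp : 1 ≤ p) {M : ℝ} (hM : 0 ≤ M) (q : ℝ → Bool) :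
    ∀ (n : ℕ) (l : List ℝ), l.length ≤ n → (∀ a ∈ l, ∀ b ∈ l, Tm p f a b ≤ M) →
    PS p f l ≤ PS p f (l.filter q) + 2 * M * (l.countP (fun x => !q x)) := by
  intro n
  induction n with
  | zero =>
      intro l hl _
      rw [List.length_eq_zero_iff.mp (Nat.le_zero.mp hl)]
      simp [PS_nil]
  | succ n ih =>
      intro l hl hT
      match l with
      | [] => simp [PS_nil]
      | [a] =>
          have h1 := PS_nonneg (p := p) (f := f) ([a].filter q)
          have h2 : (0:ℝ) ≤ 2 * M * ([a].countP (fun x => !q x)) := by positivity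
          simp only [PS_single]
          linarith
      | a :: b :: t =>
          have hTab : Tm p f a b ≤ M := hT a (by simp) b (by simp)
          by_cases hqa : q a
          · by_cases hqb : q b
            · -- both kept
              have hfil : (a :: b :: t).filter q = a :: b :: t.filter q := by
                simp [List.filter_cons, hqa, hqb]
              have hfil2 : (b :: t).filter q = b :: t.filter q := by
                simp [List.filter_cons, hqb]
              have hih := ih (b :: t) (by simpa using Nat.le_of_succ_le_succ hl)
                (fun x hx y hy => hT x (List.mem_cons_of_mem a hx) y (List.mem_cons_of_mem a hy))
              rw [hfil2] at hih
              rw [hfil, PS_cons_cons, PS_cons_cons]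
              have hcnt : ((a :: b :: t).countP (fun x => !q x) : ℝ)
                  = ((b :: t).countP (fun x => !q x) : ℝ) := by
                rw [List.countP_cons]
                simp [hqa]
              rw [hcnt]
              linarith
            · -- b dropped
              have hfil : (a :: b :: t).filter q = (a :: t).filter q := by
                simp [List.filter_cons, hqa, hqb]
              have hih := ih (a :: t) (by simp at hl ⊢; omega)
                (fun x hx y hy => hT x (by rcases List.mem_cons.mp hx with rfl | h; · simp
                                           · simp [List.mem_cons_of_mem, h])
                                     y (by rcases List.mem_cons.mp hy with rfl | h; · simp
                                           · simp [List.mem_cons_of_mem, h]))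
              have hPSbt : PS p f (b :: t) ≤ M + PS p f t := by
                rcases t with _ | ⟨c, t'⟩
                · simp [PS_single, PS_nil]; linarith [PS_nonneg (p := p) (f := f) ([] : List ℝ)]
                · rw [PS_cons_cons]
                  have := hT b (by simp) c (by simp)
                  linarith
              have hPSt : PS p f t ≤ PS p f (a :: t) := PS_cons_ge a t
              have hcnt : ((a :: b :: t).countP (fun x => !q x) : ℝ)
                  = ((a :: t).countP (fun x => !q x) : ℝ) + 1 := by
                rw [List.countP_cons, List.countP_cons, List.countP_cons]
                simp [hqa, hqb]
              rw [hfil, PS_cons_cons, hcnt]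
              linarith
          · -- a dropped
            have hfil : (a :: b :: t).filter q = (b :: t).filter q := by
              simp [List.filter_cons, hqa]
            have hih := ih (b :: t) (by simpa using Nat.le_of_succ_le_succ hl)
              (fun x hx y hy => hT x (List.mem_cons_of_mem a hx) y (List.mem_cons_of_mem a hy))
            have hcnt : ((a :: b :: t).countP (fun x => !q x) : ℝ)
                = ((b :: t).countP (fun x => !q x) : ℝ) + 1 := by
              rw [List.countP_cons]
              simp [hqa]
            rw [hfil, PS_cons_cons, hcnt]
            linarith

/-- certificate: potential is below true variation sum of the points -/
lemma Phi_le_PS (hp : 1 ≤ p) : ∀ l : List (ℝ × ℝ),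
    (∀ q ∈ l, af f q.1 < q.2) → Phi p f l ≤ PS p f (l.map Prod.fst)
  | [] => fun _ => le_refl 0
  | [_] => fun _ => le_refl 0
  | u :: v :: t => by
      intro h
      simp only [List.map_cons]
      rw [Phi_cons_cons, PS_cons_cons]
      have h1 := w_le_Tm hp (h u (by simp)) (h v (by simp))
      have h2 := Phi_le_PS hp (v :: t) (fun q hq => h q (List.mem_cons_of_mem u hq))
      simp only [List.map_cons] at h2
      linarith

end filterlem


section lemA

variable {p : ℝ} {f : ℝ → ℂ}

lemma sorted_head_le {a : ℝ} {t : List ℝ} (h : (a :: t).Pairwise (· < ·)) :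
    ∀ x ∈ a :: t, a ≤ x := by
  intro x hx
  rcases List.mem_cons.mp hx with rfl | hx'
  · exact le_refl x
  · exact le_of_lt ((List.pairwise_cons.mp h).1 x hx')

lemma sorted_le_getLast : ∀ {L : List ℝ} (h : L.Pairwise (· < ·)) (hne : L ≠ [])
    (x : ℝ), x ∈ L → x ≤ L.getLast hne := by
  intro L
  induction L with
  | nil => intro _ hne; exact absurd rfl hne
  | cons a t ih =>
      intro h hne x hx
      rcases t with _ | ⟨b, t'⟩
      · simp at hx
        simp [hx, List.getLast]
      · rw [List.getLast_cons (by simp)]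
        rcases List.mem_cons.mp hx with rfl | hx'
        · have hbl : (b :: t').getLast (by simp) ∈ b :: t' := List.getLast_mem _
          exact le_of_lt ((List.pairwise_cons.mp h).1 _ hbl)
        · exact ih (List.Pairwise.of_cons h) (by simp) x hx'

lemma PS_map_range (p : ℝ) (f : ℝ → ℂ) (g : ℕ → ℝ) : ∀ m : ℕ,
    PS p f ((List.range (m+1)).map g) = ∑ j ∈ Finset.range m, Tm p f (g j) (g (j+1)) := by
  intro m
  induction m with
  | zero =>
      have h1 : List.range 1 = [0] := rfl
      simp [h1, PS_single]
  | succ m ih =>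
      have hr : List.range (m+1+1) = List.range (m+1) ++ [m+1] := by
        rw [← Nat.succ_eq_add_one (m+1)]
        exact List.range_succ
      rw [hr, List.map_append]
      have hne : (List.range (m+1)).map g ≠ [] := by simp
      rw [List.map_singleton, PS_snoc_eq _ _ hne, ih]
      have hlast : ((List.range (m+1)).map g).getLast hne = g m := by
        rw [List.getLast_eq_getElem]
        simp
      rw [hlast, Finset.sum_range_succ]

/-- any sorted family of points in [0,1] has variation sum at most V -/
lemma PS_le_bound (hp : 1 ≤ p) {V : ℝ} (hV : ∀ s ∈ varSums p f 0 1, s ≤ V) :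
    ∀ (L : List ℝ), L.Pairwise (· < ·) → (∀ x ∈ L, 0 ≤ x ∧ x ≤ 1) →
    PS p f L ≤ V := by
  have hV0 : 0 ≤ V := by
    have h1 : Tm p f 0 1 ∈ varSums p f 0 1 := by
      refine ⟨1, fun j => (j : ℝ), Nat.one_pos, by norm_num, by norm_num, ?_, ?_⟩
      · intro j hj
        interval_cases j
        norm_num
      · simp [Tm]
    exact le_trans (Tm_nonneg p f 0 1) (hV _ h1)
  intro L hsort hmem
  rcases L with _ | ⟨a, t⟩
  · simpa [PS_nil] using hV0
  -- prepend 0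
  set T : List ℝ := if a = 0 then t else a :: t with hT
  have hL₁ : (0 : ℝ) :: T = (if a = 0 then a :: t else 0 :: a :: t) := by
    by_cases h : a = 0
    · simp [hT, h]
    · simp [hT, h]
  have hsort₁ : ((0:ℝ) :: T).Pairwise (· < ·) := by
    rw [hL₁]
    by_cases h : a = 0
    · simpa [h] using hsort
    · rw [if_neg h]
      rw [List.pairwise_cons]
      refine ⟨?_, hsort⟩
      intro x hx
      have h0a : 0 < a := lt_of_le_of_ne (hmem a (by simp)).1 (Ne.symm h)
      exact lt_of_lt_of_le h0a (sorted_head_le hsort x hx)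
  have hPS₁ : PS p f (a :: t) ≤ PS p f ((0:ℝ) :: T) := by
    rw [hL₁]
    by_cases h : a = 0
    · simp [h]
    · rw [if_neg h]
      exact PS_cons_ge 0 (a :: t)
  have hmem₁ : ∀ x ∈ (0:ℝ) :: T, 0 ≤ x ∧ x ≤ 1 := by
    rw [hL₁]
    by_cases h : a = 0
    · rw [if_pos h]; exact hmem
    · rw [if_neg h]
      intro x hx
      rcases List.mem_cons.mp hx with rfl | hx'
      · norm_num
      · exact hmem x hx'
  -- append 1
  obtain ⟨T₂, hsort₂, hPS₂, hmem₂, hlast₂⟩ :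
      ∃ T₂ : List ℝ, ((0:ℝ) :: T₂).Pairwise (· < ·) ∧
        PS p f ((0:ℝ) :: T) ≤ PS p f ((0:ℝ) :: T₂) ∧
        (∀ x ∈ (0:ℝ) :: T₂, 0 ≤ x ∧ x ≤ 1) ∧
        ((0:ℝ) :: T₂).getLast? = some 1 := by
    by_cases h : ((0:ℝ) :: T).getLast? = some 1
    · exact ⟨T, hsort₁, le_refl _, hmem₁, h⟩
    · refine ⟨T ++ [1], ?_, ?_, ?_, ?_⟩
      · have hlt : ∀ x ∈ (0:ℝ) :: T, x < 1 := by
          intro x hx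
          have h1 : x ≤ ((0:ℝ) :: T).getLast (by simp) :=
            sorted_le_getLast hsort₁ (by simp) x hx
          have h2 : ((0:ℝ) :: T).getLast (by simp) ∈ (0:ℝ) :: T := List.getLast_mem _
          have h3 : ((0:ℝ) :: T).getLast (by simp) ≤ 1 := (hmem₁ _ h2).2
          have h4 : ((0:ℝ) :: T).getLast (by simp) ≠ 1 := by
            intro hc
            exact h (by rw [List.getLast?_eq_getLast (l := (0:ℝ) :: T) (by simp), hc])
          have h5 : ((0:ℝ) :: T).getLast (by simp) < 1 := lt_of_le_of_ne h3 h4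
          linarith
        have : (0:ℝ) :: (T ++ [1]) = ((0:ℝ) :: T) ++ [1] := by simp
        rw [this, List.pairwise_append]
        exact ⟨hsort₁, List.pairwise_singleton _ _,
          fun x hx y hy => by rcases List.mem_singleton.mp hy with rfl; exact hlt x hx⟩
      · have : (0:ℝ) :: (T ++ [1]) = ((0:ℝ) :: T) ++ [1] := by simp
        rw [this]
        exact PS_snoc_ge _ 1
      · intro x hx
        rcases List.mem_cons.mp hx with rfl | hx'
        · norm_num
        · rcases List.mem_append.mp hx' with h1 | h1
          · exact hmem₁ x (List.mem_cons_of_mem _ h1)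
          · rcases List.mem_singleton.mp h1 with rfl
            norm_num
      · have : (0:ℝ) :: (T ++ [1]) = ((0:ℝ) :: T) ++ [1] := by simp
        rw [this]
        exact List.getLast?_concat
  have hlast₂' : ((0:ℝ) :: T₂).getLast (by simp) = 1 := by
    have := List.getLast?_eq_getLast (l := (0:ℝ) :: T₂) (by simp)
    rw [this] at hlast₂
    exact Option.some_injective _ hlast₂
  -- T₂ nonempty
  have hT₂ne : T₂ ≠ [] := by
    intro hcon
    rw [hcon] at hlast₂'
    simp [List.getLast] at hlast₂'
  -- set up the partition
  set m := T₂.length with hm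
  have hm0 : 0 < m := by
    rw [hm]
    exact List.length_pos_iff.mpr hT₂ne
  have hlen : ((0:ℝ) :: T₂).length = m + 1 := by simp [hm]
  set tf : ℕ → ℝ := fun j => ((0:ℝ) :: T₂).getD j 0 with htf
  have hrepr : (0:ℝ) :: T₂ = (List.range (m+1)).map tf := by
    apply List.ext_getElem
    · simp [hlen]
    · intro i h1 h2
      simp only [List.getElem_map, List.getElem_range]
      rw [htf]
      simp only []
      rw [List.getD_eq_getElem _ _ (by rw [hlen] at h1 ⊢; omega)]
  have hsum : PS p f ((0:ℝ) :: T₂) = ∑ j ∈ Finset.range m, Tm p f (tf j) (tf (j+1)) := by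
    rw [hrepr, PS_map_range]
  have hmemS : (∑ j ∈ Finset.range m, Tm p f (tf j) (tf (j+1))) ∈ varSums p f 0 1 := by
    refine ⟨m, tf, hm0, ?_, ?_, ?_, rfl⟩
    · simp [htf]
    · rw [htf]
      simp only []
      rw [List.getD_eq_getElem _ _ (by rw [hlen]; omega)]
      have := hlast₂'
      rw [List.getLast_eq_getElem] at this
      simpa [hlen] using this
    · intro j hj
      rw [htf]
      simp only []
      rw [List.getD_eq_getElem _ _ (by rw [hlen]; omega),
          List.getD_eq_getElem _ _ (by rw [hlen]; omega)]
      exact List.pairwise_iff_getElem.mp hsort₂ j (j+1) _ _ (by omega)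
  have := hV _ hmemS
  calc PS p f (a :: t) ≤ PS p f ((0:ℝ) :: T) := hPS₁
    _ ≤ PS p f ((0:ℝ) :: T₂) := hPS₂
    _ = _ := hsum
    _ ≤ V := this

end lemA


section driver

variable {p : ℝ} {f : ℝ → ℂ}

lemma bns_nonneg (hp : 1 ≤ p) (d : ℝ) : ∀ (l : List (ℝ × ℝ)) (F : List ℝ),
    0 ≤ bns f p d l F
  | [], _ => le_refl 0
  | z :: rest, F => by
      simp only [bns]
      split
      · exact le_refl 0
      · exact Real.rpow_nonneg (le_max_right _ _) _

lemma key (hp : 1 ≤ p) {V : ℝ} (hV : ∀ s ∈ varSums p f 0 1, s ≤ V) {c : ℝ} (hc : 0 < c)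
    (H : ∀ δ > (0:ℝ), ∃ L : List ℝ, L.Pairwise (· < ·) ∧
      (∀ x ∈ L, 0 ≤ x ∧ x ≤ 1 ∧ af f x < δ) ∧ c ≤ PS p f L) : False := by
  have hp' : (0:ℝ) < p := lt_of_lt_of_le one_pos hp
  set β : ℝ := ((2:ℝ)^p)⁻¹ with hβ
  have hβpos : 0 < β := beta_pos
  have hβ1 : β ≤ 1 := beta_le_one hp
  set g : ℝ := β * c / 2 with hg
  have hgpos : 0 < g := by rw [hg]; positivity
  have main : ∀ K : ℕ, ∃ (l : List (ℝ × ℝ)) (σ : ℝ), Inv f l σ ∧ 0 < σ ∧ σ ≤ 1 ∧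
      (K : ℝ) * g ≤ Phi p f l := by
    intro K
    induction K with
    | zero =>
        refine ⟨[], 1, ⟨List.Pairwise.nil, by simp⟩, one_pos, le_refl 1, ?_⟩
        simp [Phi_nil]
    | succ K ih =>
        obtain ⟨l, σ, hInv, hσ, hσ1, hPhi⟩ := ih
        set n : ℝ := (l.length : ℝ) with hn
        have hn0 : 0 ≤ n := by rw [hn]; positivity
        obtain ⟨Q, hQpos, hQdef⟩ : ∃ Q : ℝ, 0 < Q ∧ Q = (2:ℝ)^p :=
          ⟨(2:ℝ)^p, two_rpow_pos, rfl⟩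
        have hQ1 : 1 ≤ Q := hQdef ▸ one_le_two_rpow hp
        set E : ℝ := (n+1) * (4*p + 6*Q) + 1 with hE
        have hcoefpos : 0 < 4*p + 6*Q := by linarith
        have hEpos : 0 < E := by
          rw [hE]
          nlinarith
        obtain ⟨d, hd, hdσ, hd1, hdE⟩ : ∃ d : ℝ, 0 < d ∧ d ≤ σ ∧ d ≤ 1 ∧ E * d ≤ g := by
          refine ⟨min σ (min 1 (g / E)), ?_, min_le_left _ _,
            le_trans (min_le_right _ _) (min_le_left _ _), ?_⟩
          · apply lt_min hσ
            apply lt_min one_pos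
            positivity
          · have h1 : min σ (min 1 (g / E)) ≤ g / E :=
              le_trans (min_le_right _ _) (min_le_right _ _)
            calc E * min σ (min 1 (g / E)) ≤ E * (g / E) :=
                mul_le_mul_of_nonneg_left h1 (le_of_lt hEpos)
              _ = g := by field_simp
        obtain ⟨L, hLs, hLmem, hLPS⟩ := H d hd
        set F : List ℝ := L.filter (fun x => decide (x ∉ l.map Prod.fst)) with hF
        have hFs : F.Pairwise (· < ·) := hLs.filter _
        have hFmemL : ∀ x ∈ F, x ∈ L := fun x hx => List.mem_of_mem_filter hx
        have hFd : ∀ x ∈ F, af f x < d := fun x hx => (hLmem x (hFmemL x hx)).2.2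
        have hdisj : ∀ x ∈ F, x ∉ l.map Prod.fst := by
          intro x hx
          have := List.of_mem_filter hx
          simpa using this
        -- PS F is close to PS L
        have h2d : (0:ℝ) ≤ (2*d)^p := Real.rpow_nonneg (by linarith) p
        have hTb : ∀ a ∈ L, ∀ b ∈ L, Tm p f a b ≤ (2*d)^p := fun a ha b hb =>
          Tm_le_of_lt (le_of_lt hd) (hLmem a ha).2.2 (hLmem b hb).2.2 hp
        have hfil := PS_filter (f := f) hp h2d (fun x => decide (x ∉ l.map Prod.fst))
          L.length L (le_refl _) hTb
        rw [← hF] at hfil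
        have hcnt : ((L.countP (fun x => !(decide (x ∉ l.map Prod.fst)))) : ℝ) ≤ n := by
          have hnodupL : L.Nodup := hLs.imp ne_of_lt
          have hsub : L.filter (fun x => !(decide (x ∉ l.map Prod.fst))) ⊆ l.map Prod.fst := by
            intro x hx
            have := List.of_mem_filter hx
            simpa using this
          have hnd : (L.filter (fun x => !(decide (x ∉ l.map Prod.fst)))).Nodup :=
            hnodupL.filter _
          have hlen := (hnd.subperm hsub).length_le
          rw [List.countP_eq_length_filter, hn]
          calc ((L.filter (fun x => !(decide (x ∉ l.map Prod.fst)))).length : ℝ)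
              ≤ ((l.map Prod.fst).length : ℝ) := by exact_mod_cast hlen
            _ = (l.length : ℝ) := by simp
        have hPSF : c - 2*(2*d)^p * n ≤ PS p f F := by
          have h1 : 2*(2*d)^p * ((L.countP (fun x => !(decide (x ∉ l.map Prod.fst)))) : ℝ)
              ≤ 2*(2*d)^p * n := by
            apply mul_le_mul_of_nonneg_left hcnt
            positivity
          linarith
        -- merge
        have hmerge := merge_main hp hd hdσ l F hInv hFs hFd hdisj
        have hbns := bns_nonneg (f := f) hp d l F
        -- smallness of charges
        have hdp : d^p ≤ d := by
          have := Real.rpow_le_rpow_of_exponent_ge hd hd1 hp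
          simpa [Real.rpow_one] using this
        have h2dp : (2*d)^p ≤ Q * d := by
          rw [Real.mul_rpow (by norm_num) (le_of_lt hd), hQdef]
          exact mul_le_mul_of_nonneg_left hdp (le_of_lt two_rpow_pos)
        have hQd0 : (0:ℝ) ≤ Q * d := by positivity
        have hcharge : (n + 1) * (4*p*d + 4*(2*d)^p) + 2*(2*d)^p * n ≤ g := by
          have h5 : (n+1) * (4*p*d + 4*(2*d)^p) ≤ (n+1) * (4*p*d + 4*(Q*d)) := by
            apply mul_le_mul_of_nonneg_left _ (by linarith)
            linarith
          have h6 : 2*(2*d)^p * n ≤ 2*(Q*d) * n := by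
            apply mul_le_mul_of_nonneg_right _ hn0
            linarith
          have h7 : (n+1)*(4*p*d+4*(Q*d)) + 2*(Q*d)*n + 2*(Q*d) = ((n+1)*(4*p+6*Q))*d := by
            ring
          have h8 : ((n+1)*(4*p+6*Q))*d = E*d - d := by rw [hE]; ring
          linarith
        -- β * PS F ≥ β c − 2(2d)^p n
        have hβPSF : β * c - 2*(2*d)^p * n ≤ β * PS p f F := by
          have h1 : β * (c - 2*(2*d)^p * n) ≤ β * PS p f F :=
            mul_le_mul_of_nonneg_left hPSF (le_of_lt hβpos)
          have h0 : (0:ℝ) ≤ 2*(2*d)^p * n := by positivity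
          have h3 : β * (2*(2*d)^p * n) ≤ 2*(2*d)^p * n :=
            mul_le_of_le_one_left h0 hβ1
          have h2 : β * c - β * (2*(2*d)^p * n) = β * (c - 2*(2*d)^p * n) := by ring
          linarith
        refine ⟨ins d l F, d, ?_, hd, hd1, ?_⟩
        · constructor
          · exact ins_sorted d l F hInv.1 hFs hdisj
          · intro q hq
            rcases ins_mem d l F q hq with h | ⟨h1, h2⟩
            · obtain ⟨ha, hb, hc', hd'', he⟩ := hInv.2 q h
              exact ⟨ha, hb, hc', le_trans hdσ hd'', he⟩
            · obtain ⟨ha, hb, hc'⟩ := hLmem q.1 (hFmemL _ h1)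
              rw [h2]
              exact ⟨ha, hb, hc', le_refl d, hd1⟩
        · have hfinal : Phi p f l + β * PS p f F - (n + 1) * (4*p*d + 4*(2*d)^p) + bns f p d l F
              ≤ Phi p f (ins d l F) := by
            have := hmerge
            rw [← hβ, ← hn] at this
            exact this
          have hKg : ((K:ℝ)+1) * g = (K:ℝ) * g + 2 * g - g := by ring
          have hgoal : ((K+1 : ℕ):ℝ) * g ≤ Phi p f (ins d l F) := by
            push_cast
            rw [hKg]
            have hb2g : 2 * g = β * c := by rw [hg]; ring
            rw [hb2g]
            linarith
          exact hgoal
  -- final contradiction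
  obtain ⟨l, σ, hInv, hσ, hσ1, hPhi⟩ := main (Nat.ceil ((V+1)/g))
  have h1 : (V+1)/g ≤ (Nat.ceil ((V+1)/g) : ℝ) := Nat.le_ceil _
  have h2 : V + 1 ≤ (Nat.ceil ((V+1)/g) : ℝ) * g := by
    calc V + 1 = ((V+1)/g) * g := by field_simp
      _ ≤ (Nat.ceil ((V+1)/g) : ℝ) * g := mul_le_mul_of_nonneg_right h1 (le_of_lt hgpos)
  have h3 : Phi p f l ≤ PS p f (l.map Prod.fst) :=
    Phi_le_PS hp l (fun q hq => (hInv.2 q hq).2.2.1)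
  have h4 : PS p f (l.map Prod.fst) ≤ V := by
    apply PS_le_bound hp hV
    · exact hInv.1.map _ (fun {a b} h => h)
    · intro x hx
      rcases List.mem_map.mp hx with ⟨q, hq, rfl⟩
      exact ⟨(hInv.2 q hq).1, (hInv.2 q hq).2.1⟩
  linarith

end driver


section final

variable {p : ℝ} {f : ℝ → ℂ}

lemma xlt {m : ℕ} {x : ℕ → ℝ} (h : ∀ j, j + 1 < m → x j < x (j + 1)) :
    ∀ j, j < m → ∀ i, i < j → x i < x j := by
  intro j
  induction j with
  | zero => intro _ i hi; omega
  | succ j ih =>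
      intro hjm i hi
      have hstep : x j < x (j+1) := h j hjm
      rcases Nat.lt_succ_iff_lt_or_eq.mp hi with hij | rfl
      · exact lt_trans (ih (by omega) i hij) hstep
      · exact hstep

end final

end Stmt8Aux

theorem stmt8 (p : ℝ) (hp : 1 ≤ p) (f : ℝ → ℂ)
    (hf : BddAbove (varSums p f 0 1)) :
    ∀ ε > 0, ∃ δ > 0, ∀ (m : ℕ) (x : ℕ → ℝ), 0 < m →
      (0 ≤ x 0) → (x (m - 1) ≤ 1) → (∀ j, j + 1 < m → x j < x (j + 1)) →
      (∀ j < m, ‖f (x j)‖ < δ) →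
      (∑ j ∈ Finset.range (m - 1), ‖f (x (j + 1)) - f (x j)‖ ^ p) ^ (1 / p) < ε := by
  intro ε hε
  by_contra hcon
  push_neg at hcon
  obtain ⟨V, hV⟩ := hf
  have hV' : ∀ s ∈ varSums p f 0 1, s ≤ V := fun s hs => hV hs
  have hp' : (0:ℝ) < p := lt_of_lt_of_le one_pos hp
  have hc : (0:ℝ) < ε ^ p := Real.rpow_pos_of_pos hε p
  apply Stmt8Aux.key hp hV' hc
  intro δ hδ
  obtain ⟨m, x, hm, h0, h1, hmono, hsmall, hbig⟩ := hcon δ hδ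
  have hxlt := Stmt8Aux.xlt hmono
  refine ⟨(List.range m).map x, ?_, ?_, ?_⟩
  · -- sorted
    rw [List.pairwise_iff_getElem]
    intro i j hi hj hij
    simp only [List.getElem_map, List.getElem_range]
    simp only [List.length_map, List.length_range] at hi hj
    exact hxlt j hj i hij
  · -- membership bounds
    intro y hy
    rcases List.mem_map.mp hy with ⟨j, hj, rfl⟩
    rw [List.mem_range] at hj
    have hx0 : 0 ≤ x j := by
      rcases Nat.eq_zero_or_pos j with rfl | hjpos
      · exact h0
      · exact le_trans h0 (le_of_lt (hxlt j hj 0 hjpos))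
    have hx1 : x j ≤ 1 := by
      rcases eq_or_lt_of_le (Nat.le_of_lt_succ (by omega : j < (m-1)+1)) with heq | hlt
      · rw [heq]; exact h1
      · exact le_trans (le_of_lt (hxlt (m-1) (by omega) j hlt)) h1
    exact ⟨hx0, hx1, hsmall j hj⟩
  · -- the sum is large
    obtain ⟨k, rfl⟩ : ∃ k, m = k + 1 := ⟨m - 1, by omega⟩
    have hPS : Stmt8Aux.PS p f ((List.range (k+1)).map x)
        = ∑ j ∈ Finset.range k, Stmt8Aux.Tm p f (x j) (x (j+1)) :=
      Stmt8Aux.PS_map_range p f x k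
    have hSdef : (∑ j ∈ Finset.range ((k+1) - 1), ‖f (x (j + 1)) - f (x j)‖ ^ p)
        = ∑ j ∈ Finset.range k, Stmt8Aux.Tm p f (x j) (x (j+1)) := by
      simp only [Nat.add_sub_cancel]
      rfl
    set S : ℝ := ∑ j ∈ Finset.range k, Stmt8Aux.Tm p f (x j) (x (j+1)) with hSdef2
    have hS0 : 0 ≤ S := Finset.sum_nonneg (fun j _ => Stmt8Aux.Tm_nonneg p f _ _)
    rw [hSdef] at hbig
    have h2 : ε ^ p ≤ (S ^ (1/p)) ^ p :=
      Real.rpow_le_rpow (le_of_lt hε) hbig (le_of_lt hp')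
    have h3 : (S ^ (1/p)) ^ p = S := by
      rw [← Real.rpow_mul hS0, one_div_mul_cancel (ne_of_gt hp'), Real.rpow_one]
    rw [h3] at h2
    rw [hPS]
    exact h2
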